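/- The Motzkin polynomial M(x,y,z) = x^4 y^2 + x^2 y^4 - 3 x^2 y^2 z^2 + z^6 is not a sum of squares of polynomials. -/

import Mathlib

open MvPolynomial Finset

noncomputable def f3 (a b c : ℕ) : Fin 3 →₀ ℕ :=
  Finsupp.single 0 a + Finsupp.single 1 b + Finsupp.single 2 c

lemma f3_apply0 (a b c : ℕ) : f3 a b c 0 = a := by
  simp [f3, Finsupp.single_apply]
lemma f3_apply1 (a b c : ℕ) : f3 a b c 1 = b := by
  simp [f3, Finsupp.single_apply]
lemma f3_apply2 (a b c : ℕ) : f3 a b c 2 = c := by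
  simp [f3, Finsupp.single_apply]

lemma f3_eq (u : Fin 3 →₀ ℕ) : f3 (u 0) (u 1) (u 2) = u := by
  ext j
  fin_cases j
  · exact f3_apply0 _ _ _
  · exact f3_apply1 _ _ _
  · exact f3_apply2 _ _ _

lemma f3_add (a b c a' b' c' : ℕ) :
    f3 a b c + f3 a' b' c' = f3 (a+a') (b+b') (c+c') := by
  simp only [f3, Finsupp.single_add]
  abel

lemma f3_eq_iff {a b c a' b' c' : ℕ} :
    f3 a b c = f3 a' b' c' ↔ a = a' ∧ b = b' ∧ c = c' := by
  constructor
  · intro h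
    exact ⟨by simpa [f3_apply0] using DFunLike.congr_fun h 0,
      by simpa [f3_apply1] using DFunLike.congr_fun h 1,
      by simpa [f3_apply2] using DFunLike.congr_fun h 2⟩
  · rintro ⟨rfl, rfl, rfl⟩; rfl

lemma sum_antidiagonal_f3 (A B C : ℕ) (F : (Fin 3 →₀ ℕ) × (Fin 3 →₀ ℕ) → ℝ) :
    ∑ p ∈ Finset.HasAntidiagonal.antidiagonal (f3 A B C), F p
      = ∑ a ∈ range (A+1), ∑ b ∈ range (B+1), ∑ c ∈ range (C+1),
          F (f3 a b c, f3 (A-a) (B-b) (C-c)) := by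
  rw [← Finset.sum_product', ← Finset.sum_product']
  refine Finset.sum_nbij' (fun p => ((p.1 0, p.1 1), p.1 2))
      (fun t => (f3 t.1.1 t.1.2 t.2, f3 (A - t.1.1) (B - t.1.2) (C - t.2))) ?_ ?_ ?_ ?_ ?_
  · rintro ⟨u, v⟩ hp
    rw [Finset.HasAntidiagonal.mem_antidiagonal] at hp
    have h0 : u 0 + v 0 = A := by simpa [f3_apply0] using DFunLike.congr_fun hp 0
    have h1 : u 1 + v 1 = B := by simpa [f3_apply1] using DFunLike.congr_fun hp 1
    have h2 : u 2 + v 2 = C := by simpa [f3_apply2] using DFunLike.congr_fun hp 2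
    simp only [Finset.mem_product, Finset.mem_range]
    exact ⟨⟨by omega, by omega⟩, by omega⟩
  · rintro ⟨⟨a, b⟩, c⟩ ht
    simp only [Finset.mem_product, Finset.mem_range] at ht
    rw [Finset.HasAntidiagonal.mem_antidiagonal]
    simp only
    rw [f3_add, show a + (A - a) = A by omega, show b + (B - b) = B by omega,
      show c + (C - c) = C by omega]
  · rintro ⟨u, v⟩ hp
    rw [Finset.HasAntidiagonal.mem_antidiagonal] at hp
    have h0 : u 0 + v 0 = A := by simpa [f3_apply0] using DFunLike.congr_fun hp 0
    have h1 : u 1 + v 1 = B := by simpa [f3_apply1] using DFunLike.congr_fun hp 1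
    have h2 : u 2 + v 2 = C := by simpa [f3_apply2] using DFunLike.congr_fun hp 2
    have hv : f3 (A - u 0) (B - u 1) (C - u 2) = v := by
      rw [show A - u 0 = v 0 by omega, show B - u 1 = v 1 by omega,
        show C - u 2 = v 2 by omega]
      exact f3_eq v
    exact Prod.ext (f3_eq u) hv
  · rintro ⟨⟨a, b⟩, c⟩ ht
    simp [f3_apply0, f3_apply1, f3_apply2]
  · rintro ⟨u, v⟩ hp
    rw [Finset.HasAntidiagonal.mem_antidiagonal] at hp
    have h0 : u 0 + v 0 = A := by simpa [f3_apply0] using DFunLike.congr_fun hp 0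
    have h1 : u 1 + v 1 = B := by simpa [f3_apply1] using DFunLike.congr_fun hp 1
    have h2 : u 2 + v 2 = C := by simpa [f3_apply2] using DFunLike.congr_fun hp 2
    have hv : f3 (A - u 0) (B - u 1) (C - u 2) = v := by
      rw [show A - u 0 = v 0 by omega, show B - u 1 = v 1 by omega,
        show C - u 2 = v 2 by omega]
      exact f3_eq v
    simp only [f3_eq u, hv]

lemma sum_sq_zero {r : ℕ} {x : Fin r → ℝ} (h : (0:ℝ) = ∑ i, x i * x i) :
    ∀ i, x i = 0 := by
  intro i
  have := (Finset.sum_eq_zero_iff_of_nonneg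
    (fun j _ => mul_self_nonneg (x j))).1 h.symm i (Finset.mem_univ i)
  exact mul_self_eq_zero.1 this

theorem motzkin_not_sum_of_squares :
    ¬ ∃ (r : ℕ) (q : Fin r → MvPolynomial (Fin 3) ℝ),
      (X 0)^4 * (X 1)^2 + (X 0)^2 * (X 1)^4
        - 3 * (X 0)^2 * (X 1)^2 * (X 2)^2 + (X 2)^6
      = ∑ i, (q i)^2 := by
  rintro ⟨r, q, h⟩
  have hrep : (X 0 : MvPolynomial (Fin 3) ℝ)^4 * (X 1)^2 + (X 0)^2 * (X 1)^4
        - 3 * (X 0)^2 * (X 1)^2 * (X 2)^2 + (X 2)^6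
      = monomial (f3 4 2 0) 1 + monomial (f3 2 4 0) 1
        - monomial (f3 2 2 2) 3 + monomial (f3 0 0 6) 1 := by
    rw [show (3 : MvPolynomial (Fin 3) ℝ) = C 3 from (map_ofNat C 3).symm]
    simp [X_pow_eq_monomial, monomial_mul, C_mul_monomial, f3, Finsupp.single_zero]
  rw [hrep] at h
  have key : ∀ A B C : ℕ,
      coeff (f3 A B C) ((monomial (f3 4 2 0) 1 + monomial (f3 2 4 0) 1
        - monomial (f3 2 2 2) 3 + monomial (f3 0 0 6) 1 : MvPolynomial (Fin 3) ℝ))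
      = ∑ i, ∑ a ∈ range (A+1), ∑ b ∈ range (B+1), ∑ c ∈ range (C+1),
          coeff (f3 a b c) (q i) * coeff (f3 (A-a) (B-b) (C-c)) (q i) := by
    intro A B C
    rw [h, MvPolynomial.coeff_sum]
    refine Finset.sum_congr rfl fun i _ => ?_
    rw [sq, MvPolynomial.coeff_mul, sum_antidiagonal_f3]
  -- kill (0,0,0)
  have E000 := key 0 0 0
  simp only [coeff_add, coeff_sub, coeff_monomial, f3_eq_iff,
    Finset.sum_range_succ, Finset.sum_range_zero] at E000
  norm_num at E000
  have k000 := sum_sq_zero E000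
  -- kill (1,0,0), (0,1,0), (0,0,1)
  have E200 := key 2 0 0
  simp only [coeff_add, coeff_sub, coeff_monomial, f3_eq_iff,
    Finset.sum_range_succ, Finset.sum_range_zero] at E200
  norm_num [k000] at E200
  have k100 := sum_sq_zero E200
  have E020 := key 0 2 0
  simp only [coeff_add, coeff_sub, coeff_monomial, f3_eq_iff,
    Finset.sum_range_succ, Finset.sum_range_zero] at E020
  norm_num [k000] at E020
  have k010 := sum_sq_zero E020
  have E002 := key 0 0 2
  simp only [coeff_add, coeff_sub, coeff_monomial, f3_eq_iff,
    Finset.sum_range_succ, Finset.sum_range_zero] at E002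
  norm_num [k000] at E002
  have k001 := sum_sq_zero E002
  -- kill (2,0,0), (0,2,0), (0,0,2)
  have E400 := key 4 0 0
  simp only [coeff_add, coeff_sub, coeff_monomial, f3_eq_iff,
    Finset.sum_range_succ, Finset.sum_range_zero] at E400
  norm_num [k000, k100] at E400
  have k200 := sum_sq_zero E400
  have E040 := key 0 4 0
  simp only [coeff_add, coeff_sub, coeff_monomial, f3_eq_iff,
    Finset.sum_range_succ, Finset.sum_range_zero] at E040
  norm_num [k000, k010] at E040
  have k020 := sum_sq_zero E040
  have E004 := key 0 0 4
  simp only [coeff_add, coeff_sub, coeff_monomial, f3_eq_iff,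
    Finset.sum_range_succ, Finset.sum_range_zero] at E004
  norm_num [k000, k001] at E004
  have k002 := sum_sq_zero E004
  -- kill (3,0,0), (0,3,0)
  have E600 := key 6 0 0
  simp only [coeff_add, coeff_sub, coeff_monomial, f3_eq_iff,
    Finset.sum_range_succ, Finset.sum_range_zero] at E600
  norm_num [k000, k100, k200] at E600
  have k300 := sum_sq_zero E600
  have E060 := key 0 6 0
  simp only [coeff_add, coeff_sub, coeff_monomial, f3_eq_iff,
    Finset.sum_range_succ, Finset.sum_range_zero] at E060
  norm_num [k000, k010, k020] at E060
  have k030 := sum_sq_zero E060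
  -- kill (1,1,0), (1,0,1), (0,1,1)
  have E220 := key 2 2 0
  simp only [coeff_add, coeff_sub, coeff_monomial, f3_eq_iff,
    Finset.sum_range_succ, Finset.sum_range_zero] at E220
  norm_num [k000, k100, k010, k200, k020] at E220
  have k110 := sum_sq_zero E220
  have E202 := key 2 0 2
  simp only [coeff_add, coeff_sub, coeff_monomial, f3_eq_iff,
    Finset.sum_range_succ, Finset.sum_range_zero] at E202
  norm_num [k000, k100, k001, k200, k002] at E202
  have k101 := sum_sq_zero E202
  have E022 := key 0 2 2
  simp only [coeff_add, coeff_sub, coeff_monomial, f3_eq_iff,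
    Finset.sum_range_succ, Finset.sum_range_zero] at E022
  norm_num [k000, k010, k001, k020, k002] at E022
  have k011 := sum_sq_zero E022
  -- kill (2,0,1), (0,2,1)
  have E402 := key 4 0 2
  simp only [coeff_add, coeff_sub, coeff_monomial, f3_eq_iff,
    Finset.sum_range_succ, Finset.sum_range_zero] at E402
  norm_num [k000, k100, k001, k200, k002, k300, k101] at E402
  have k201 := sum_sq_zero E402
  have E042 := key 0 4 2
  simp only [coeff_add, coeff_sub, coeff_monomial, f3_eq_iff,
    Finset.sum_range_succ, Finset.sum_range_zero] at E042
  norm_num [k000, k010, k001, k020, k002, k030, k011] at E042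
  have k021 := sum_sq_zero E042
  -- kill (1,0,2), (0,1,2)
  have E204 := key 2 0 4
  simp only [coeff_add, coeff_sub, coeff_monomial, f3_eq_iff,
    Finset.sum_range_succ, Finset.sum_range_zero] at E204
  norm_num [k000, k100, k001, k200, k002, k101, k201] at E204
  have k102 := sum_sq_zero E204
  have E024 := key 0 2 4
  simp only [coeff_add, coeff_sub, coeff_monomial, f3_eq_iff,
    Finset.sum_range_succ, Finset.sum_range_zero] at E024
  norm_num [k000, k010, k001, k020, k002, k011, k021] at E024
  have k012 := sum_sq_zero E024
  -- final contradiction at (2,2,2)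
  have E222 := key 2 2 2
  simp only [coeff_add, coeff_sub, coeff_monomial, f3_eq_iff,
    Finset.sum_range_succ, Finset.sum_range_zero] at E222
  norm_num [k000, k100, k010, k001, k200, k020, k002, k110, k101, k011,
    k201, k021, k102, k012] at E222
  have hnn : (0:ℝ) ≤ ∑ i, coeff (f3 1 1 1) (q i) * coeff (f3 1 1 1) (q i) :=
    Finset.sum_nonneg fun i _ => mul_self_nonneg _
  linarith [E222, hnn]
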